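/- The parameter derivative of the Laguerre polynomial is ∂/∂α L_n^{(α)}(x) = ∑_{m=0}^{n−1} L_m^{(α)}(x)/(n−m). -/

import Mathlib

open Finset

/-- Generalized binomial coefficient `binom(α, k) = (α)(α−1)⋯(α−k+1)/k!`. -/
noncomputable def genBinom (α : ℝ) (k : ℕ) : ℝ :=
  (∏ j ∈ Finset.range k, (α - j)) / (Nat.factorial k)

/-- Generalized Laguerre polynomial value
`L_n^{(α)}(x) = ∑_{k=0}^n (−1)^k binom(n+α, n−k) x^k / k!`. -/
noncomputable def laguerre (n : ℕ) (α x : ℝ) : ℝ :=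
  ∑ k ∈ Finset.range (n + 1),
    (-1 : ℝ) ^ k * genBinom (n + α) (n - k) * x ^ k / (Nat.factorial k)

/-- Rising product `Pprod r b = (b+1)(b+2)⋯(b+r)`. -/
noncomputable def Pprod (r : ℕ) (b : ℝ) : ℝ := ∏ j ∈ Finset.range r, (b + (j + 1))

lemma Pprod_succ (r : ℕ) (b : ℝ) : Pprod (r + 1) b = Pprod r b * (b + (r + 1)) :=
  Finset.prod_range_succ _ _

lemma genBinom_eq (r : ℕ) (b : ℝ) : genBinom ((r : ℝ) + b) r = Pprod r b / r.factorial := by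
  unfold genBinom Pprod
  congr 1
  rw [← Finset.prod_range_reflect (fun j => ((r : ℝ) + b - j)) r]
  refine Finset.prod_congr rfl fun j hj => ?_
  have hj' := Finset.mem_range.mp hj
  have h1 : (r - 1 - j : ℕ) = r - (j + 1) := by omega
  have h2 : ((r - (j + 1) : ℕ) : ℝ) = (r : ℝ) - (j + 1) := by
    have : j + 1 ≤ r := hj'
    push_cast [Nat.cast_sub this]
    ring
  rw [h1, h2]
  ring

lemma sumid (r : ℕ) (b : ℝ) :
    ∑ s ∈ Finset.range (r + 1),
        (((r+1).factorial : ℝ) / (s.factorial * (((r+1 : ℕ) : ℝ) - s))) * Pprod s b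
      = (∑ s ∈ Finset.range r,
          ((r.factorial : ℝ) / (s.factorial * ((r : ℝ) - s))) * Pprod s b) * (b + (r + 1))
        + Pprod r b := by
  push_cast [Nat.factorial_succ]
  rw [Finset.sum_range_succ'
    (fun s => ((r:ℝ)+1) * (r.factorial:ℝ) / ((s.factorial:ℝ) * ((r:ℝ) + 1 - (s:ℝ))) * Pprod s b) r]
  have hL : ∀ s ∈ Finset.range r,
      ((r:ℝ)+1) * (r.factorial:ℝ) / ((((s+1:ℕ).factorial:ℝ)) * ((r:ℝ) + 1 - ((s+1:ℕ):ℝ)))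
          * Pprod (s+1) b
        = ((r.factorial : ℝ) / (s.factorial * ((r : ℝ) - s))) * Pprod (s+1) b
          + ((r.factorial : ℝ) / ((s+1:ℕ).factorial : ℝ)) * Pprod (s+1) b := by
    intro s hs
    have hs' := Finset.mem_range.mp hs
    have h3 : ((r : ℝ) - s) ≠ 0 := by
      have : (s : ℝ) < r := by exact_mod_cast hs'
      intro h; nlinarith
    have h4 : (s.factorial : ℝ) ≠ 0 := by exact_mod_cast s.factorial_ne_zero
    rw [← add_mul]
    congr 1
    rw [Nat.factorial_succ s]
    push_cast
    field_simp
    rw [show (r:ℝ) + 1 - (s + 1) = r - s by ring, mul_div_cancel_right₀ _ h3]; ring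
  have hR : ∀ s ∈ Finset.range r,
      ((r.factorial : ℝ) / (s.factorial * ((r : ℝ) - s))) * Pprod s b * (b + ((r:ℝ) + 1))
        = ((r.factorial : ℝ) / (s.factorial * ((r : ℝ) - s))) * Pprod (s+1) b
          + ((r.factorial : ℝ) / (s.factorial : ℝ)) * Pprod s b := by
    intro s hs
    have hs' := Finset.mem_range.mp hs
    have h3 : ((r : ℝ) - s) ≠ 0 := by
      have : (s : ℝ) < r := by exact_mod_cast hs'
      intro h; nlinarith
    have h4 : (s.factorial : ℝ) ≠ 0 := by exact_mod_cast s.factorial_ne_zero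
    rw [Pprod_succ]
    field_simp
    ring
  have h0 : ((r:ℝ)+1) * (r.factorial:ℝ) / (((Nat.factorial 0 : ℕ):ℝ) * ((r:ℝ) + 1 - ((0:ℕ):ℝ)))
      * Pprod 0 b = (r.factorial : ℝ) * Pprod 0 b := by
    have : ((r:ℝ) + 1) ≠ 0 := by positivity
    simp [Nat.factorial]
    left; field_simp
  have hshift :
      ∑ s ∈ Finset.range r, ((r.factorial : ℝ) / ((s+1:ℕ).factorial : ℝ)) * Pprod (s+1) b
          + (r.factorial : ℝ) * Pprod 0 b
        = ∑ s ∈ Finset.range r, ((r.factorial : ℝ) / (s.factorial : ℝ)) * Pprod s b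
          + Pprod r b := by
    have h1 := Finset.sum_range_succ'
      (fun s => ((r.factorial : ℝ) / (s.factorial : ℝ)) * Pprod s b) r
    have h2 := Finset.sum_range_succ
      (fun s => ((r.factorial : ℝ) / (s.factorial : ℝ)) * Pprod s b) r
    have h3 : ((r.factorial : ℝ) / (r.factorial : ℝ)) = 1 := by
      rw [div_self]; exact_mod_cast r.factorial_ne_zero
    have h4 : ((r.factorial : ℝ) / ((Nat.factorial 0 : ℕ) : ℝ)) = (r.factorial : ℝ) := by
      simp [Nat.factorial]
    rw [h3, one_mul] at h2
    rw [h4] at h1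
    linarith [h1, h2]
  rw [Finset.sum_congr rfl hL, Finset.sum_mul, Finset.sum_congr rfl hR,
    Finset.sum_add_distrib, Finset.sum_add_distrib, h0]
  linarith [hshift]

lemma key (r : ℕ) (b : ℝ) :
    HasDerivAt (fun c => Pprod r c)
      (∑ s ∈ Finset.range r, ((r.factorial : ℝ) / (s.factorial * ((r : ℝ) - s))) * Pprod s b)
      b := by
  induction r with
  | zero => simpa [Pprod] using hasDerivAt_const b (1 : ℝ)
  | succ r ih =>
      have h1 : HasDerivAt (fun c => Pprod r c * (c + (r + 1)))
          ((∑ s ∈ Finset.range r,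
              ((r.factorial : ℝ) / (s.factorial * ((r : ℝ) - s))) * Pprod s b) * (b + (r + 1))
            + Pprod r b * 1) b :=
        ih.mul ((hasDerivAt_id b).add_const _)
      have heq : (fun c => Pprod (r + 1) c) = fun c => Pprod r c * (c + (r + 1)) := by
        funext c; exact Pprod_succ r c
      rw [heq]
      convert h1 using 1
      rw [mul_one]
      exact sumid r b

lemma key2 (r : ℕ) (b : ℝ) :
    HasDerivAt (fun c => genBinom ((r : ℝ) + c) r)
      (∑ s ∈ Finset.range r, genBinom ((s : ℝ) + b) s / ((r : ℝ) - s)) b := by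
  have h := (key r b).div_const (r.factorial : ℝ)
  have heq : (fun c => genBinom ((r : ℝ) + c) r) = fun c => Pprod r c / r.factorial := by
    funext c; exact genBinom_eq r c
  rw [heq]
  refine h.congr_deriv (Eq.symm ?_)
  rw [Finset.sum_div]
  refine Finset.sum_congr rfl fun s hs => ?_
  rw [genBinom_eq]
  have hs' := Finset.mem_range.mp hs
  have h1 : (s.factorial : ℝ) ≠ 0 := by exact_mod_cast s.factorial_ne_zero
  have h2 : (r.factorial : ℝ) ≠ 0 := by exact_mod_cast r.factorial_ne_zero
  have h3 : ((r : ℝ) - s) ≠ 0 := by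
    have : (s : ℝ) < r := by exact_mod_cast hs'
    intro h; nlinarith
  field_simp

theorem laguerre_parameter_derivative (n : ℕ) (α x : ℝ) :
    HasDerivAt (fun a : ℝ => laguerre n a x)
      (∑ m ∈ Finset.range n, laguerre m α x / (n - m)) α := by
  have hterm : ∀ k ∈ Finset.range (n + 1),
      HasDerivAt (fun a : ℝ => (-1 : ℝ) ^ k * genBinom (n + a) (n - k) * x ^ k / (Nat.factorial k))
        (((-1 : ℝ) ^ k * x ^ k / k.factorial) *
          ∑ s ∈ Finset.range (n - k),
            genBinom ((s : ℝ) + (α + k)) s / (((n - k : ℕ) : ℝ) - s)) α := by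
    intro k hk
    have hk' : k ≤ n := Nat.lt_succ_iff.mp (Finset.mem_range.mp hk)
    have hinner : HasDerivAt (fun a : ℝ => a + (k : ℝ)) 1 α := (hasDerivAt_id α).add_const _
    have h := (key2 (n - k) (α + k)).comp α hinner
    have heq : (fun a : ℝ => (-1 : ℝ) ^ k * genBinom (n + a) (n - k) * x ^ k / k.factorial)
        = fun a : ℝ => ((-1 : ℝ) ^ k * x ^ k / k.factorial)
            * genBinom (((n - k : ℕ) : ℝ) + (a + k)) (n - k) := by
      funext a
      have harg : ((n : ℝ) + a) = ((n - k : ℕ) : ℝ) + (a + k) := by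
        push_cast [Nat.cast_sub hk']; ring
      rw [harg]; ring
    rw [heq]
    simpa using HasDerivAt.const_mul _ h
  have hsum := HasDerivAt.fun_sum hterm
  have hfun : (fun a : ℝ => laguerre n a x)
      = fun a : ℝ => ∑ k ∈ Finset.range (n + 1),
          (-1 : ℝ) ^ k * genBinom (n + a) (n - k) * x ^ k / (Nat.factorial k) := by
    funext a; rfl
  rw [hfun]
  refine hsum.congr_deriv (Eq.symm ?_)
  rw [Finset.sum_range_succ]
  have hlast : ((-1 : ℝ) ^ n * x ^ n / n.factorial) *
      ∑ s ∈ Finset.range (n - n),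
        genBinom ((s : ℝ) + (α + n)) s / (((n - n : ℕ) : ℝ) - s) = 0 := by
    simp [Nat.sub_self]
  rw [hlast, add_zero]
  simp only [laguerre, Finset.sum_div]
  conv_lhs => simp only [Finset.range_eq_Ico]
  have hswap := Finset.sum_Ico_Ico_comm 0 n (fun k m =>
    (-1 : ℝ) ^ k * genBinom ((m : ℝ) + α) (m - k) * x ^ k / (Nat.factorial k) / ((n : ℝ) - m))
  rw [← hswap]
  rw [← Finset.range_eq_Ico]
  refine Finset.sum_congr rfl fun k hk => ?_
  have hk' := Finset.mem_range.mp hk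
  rw [Finset.sum_Ico_eq_sum_range, Finset.mul_sum]
  refine Finset.sum_congr rfl fun s hs => ?_
  have hs' := Finset.mem_range.mp hs
  have h1 : (k + s) - k = s := by omega
  have h2 : (((k + s : ℕ)) : ℝ) + α = (s : ℝ) + (α + k) := by push_cast; ring
  have h3 : (((n - k : ℕ)) : ℝ) - s = (n : ℝ) - ((k + s : ℕ) : ℝ) := by
    have : k ≤ n := le_of_lt hk'
    push_cast [Nat.cast_sub this]
    ring
  rw [h1, h2, h3]
  ring
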